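/- Let n ≥ 2, x*, x₀ ∈ ℝⁿ with x₀ ≠ x*, g ∈ ℝⁿ, and σ > 0. There exists a quadratic function f(x) = ½xᵀQx + bᵀx + c with Q symmetric, minimum eigenvalue λ_min(Q) = σ, minimizer at x* (i.e., Qx* = -b), and ∇f(x₀) = g, if and only if (i) ‖x₀ - x*‖ ≤ ‖g‖/σ and (ii) either g is a positive scalar multiple of x₀ - x* or ∠(g, x₀ - x*) < arccos((σ/‖g‖)‖x₀ - x*‖). -/

import Mathlib

open Matrix

local notation "⟪" x ", " y "⟫" => @inner ℝ _ _ x y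

lemma psd_eq_zero' {E : Type*} [NormedAddCommGroup E] [InnerProductSpace ℝ E]
    (A : E →ₗ[ℝ] E) (hsym : ∀ x y : E, ⟪A x, y⟫ = ⟪x, A y⟫)
    (hpos : ∀ x : E, (0:ℝ) ≤ ⟪A x, x⟫) (d : E) (hd : ⟪A d, d⟫ = (0:ℝ)) : A d = 0 := by
  by_contra h
  set a : ℝ := ⟪A d, A d⟫ with ha
  have ha0 : 0 < a := by
    have h2 := @inner_self_eq_zero ℝ _ _ _ _ (A d)
    have hnn : 0 ≤ a := real_inner_self_nonneg
    rcases hnn.lt_or_eq with h' | h'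
    · exact h'
    · exact absurd (h2.mp h'.symm) h
  set b : ℝ := ⟪A (A d), A d⟫ with hb
  have hb0 : 0 ≤ b := hpos (A d)
  have key : ∀ t : ℝ, 0 ≤ 2 * t * a + t ^ 2 * b := by
    intro t
    have hp := hpos (d + t • A d)
    have h1 : ⟪A (A d), d⟫ = a := hsym (A d) d
    have expand : ⟪A (d + t • A d), d + t • A d⟫ = 2 * t * a + t ^ 2 * b := by
      simp only [map_add, LinearMap.map_smul, inner_add_left, inner_add_right,
        real_inner_smul_left, real_inner_smul_right, hd, h1]
      ring
    linarith [expand ▸ hp]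
  rcases hb0.eq_or_lt with h' | h'
  · have := key (-1); nlinarith
  · have h2 := key (-(a / b))
    have h3 : a / b * b = a := div_mul_cancel₀ _ h'.ne'
    nlinarith [div_pos ha0 h']

lemma exists_ortho' {n : ℕ} (hn : 2 ≤ n) (w : EuclideanSpace ℝ (Fin n)) :
    ∃ v : EuclideanSpace ℝ (Fin n), v ≠ 0 ∧ ⟪w, v⟫ = (0:ℝ) := by
  have hpos : 0 < n := by omega
  rcases eq_or_ne w 0 with rfl | hw
  · refine ⟨EuclideanSpace.single ⟨0, hpos⟩ 1, ?_, ?_⟩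
    · intro h
      have h2 : (EuclideanSpace.single (⟨0, hpos⟩ : Fin n) (1:ℝ)) ⟨0, hpos⟩ = 0 := by
        rw [h]; rfl
      rw [EuclideanSpace.single_apply] at h2
      simp at h2
    · exact inner_zero_left _
  · have hrank : Module.finrank ℝ (EuclideanSpace ℝ (Fin n)) = n := by
      simp [finrank_euclideanSpace]
    have hspan : Module.finrank ℝ (ℝ ∙ w) = 1 := finrank_span_singleton hw
    have hsum := Submodule.finrank_add_finrank_orthogonal (𝕜 := ℝ) (ℝ ∙ w)
    have horth : 0 < Module.finrank ℝ ((ℝ ∙ w)ᗮ) := by omega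
    have hne : (ℝ ∙ w)ᗮ ≠ ⊥ := by
      intro hbot
      rw [hbot] at horth
      simp at horth
    obtain ⟨v, hv, hv0⟩ := Submodule.exists_mem_ne_zero_of_ne_bot hne
    exact ⟨v, hv0, (Submodule.mem_orthogonal _ _).mp hv w (Submodule.mem_span_singleton_self w)⟩

lemma toE_one' {n : ℕ} (v : EuclideanSpace ℝ (Fin n)) :
    Matrix.toEuclideanLin (1 : Matrix (Fin n) (Fin n) ℝ) v = v := by
  rw [Matrix.toEuclideanLin_apply]
  simp

lemma toE_rankone' {n : ℕ} (w v : EuclideanSpace ℝ (Fin n)) :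
    Matrix.toEuclideanLin (Matrix.of fun i j => w i * w j) v = (⟪w, v⟫ : ℝ) • w := by
  rw [Matrix.toEuclideanLin_apply]
  ext i
  simp only [PiLp.toLp_apply, Matrix.mulVec, dotProduct, Matrix.of_apply, PiLp.smul_apply, smul_eq_mul,
    PiLp.inner_apply, RCLike.inner_apply, conj_trivial]
  rw [Finset.sum_mul]
  exact Finset.sum_congr rfl fun j _ => by show w i * w j * v j = v j * w j * w i; ring

lemma rankone_symm' {n : ℕ} (w : EuclideanSpace ℝ (Fin n)) :
    (Matrix.of fun i j => w i * w j : Matrix (Fin n) (Fin n) ℝ).IsSymm := by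
  ext i j
  simp [Matrix.transpose_apply, mul_comm]

lemma toE_smul' {n : ℕ} (r : ℝ) (M : Matrix (Fin n) (Fin n) ℝ) :
    Matrix.toEuclideanLin (r • M) = r • Matrix.toEuclideanLin M :=
  _root_.map_smul (Matrix.toEuclideanLin : Matrix (Fin n) (Fin n) ℝ ≃ₗ[ℝ] _) r M

lemma construct' {n : ℕ} (hn : 2 ≤ n) (d g : EuclideanSpace ℝ (Fin n)) (hd : d ≠ 0)
    (σ : ℝ) (hσ : 0 < σ) (h : g = σ • d ∨ σ * ‖d‖ ^ 2 < ⟪g, d⟫) :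
    ∃ Q : Matrix (Fin n) (Fin n) ℝ, Q.IsSymm ∧
      (∀ v : EuclideanSpace ℝ (Fin n),
        σ * ‖v‖ ^ 2 ≤ (inner ℝ (Matrix.toEuclideanLin Q v) v : ℝ)) ∧
      (∃ v : EuclideanSpace ℝ (Fin n), v ≠ 0 ∧ Matrix.toEuclideanLin Q v = σ • v) ∧
      Matrix.toEuclideanLin Q d = g := by
  rcases h with rfl | hlt
  · refine ⟨σ • 1, ?_, ?_, ⟨d, hd, ?_⟩, ?_⟩
    · show (σ • (1 : Matrix (Fin n) (Fin n) ℝ))ᵀ = σ • 1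
      rw [Matrix.transpose_smul, Matrix.transpose_one]
    · intro v
      rw [toE_smul', LinearMap.smul_apply, toE_one', real_inner_smul_left,
        real_inner_self_eq_norm_sq]
    · rw [toE_smul', LinearMap.smul_apply, toE_one']
    · rw [toE_smul', LinearMap.smul_apply, toE_one']
  · set w : EuclideanSpace ℝ (Fin n) := g - σ • d with hw
    set c : ℝ := ⟪w, d⟫ with hc
    have hc0 : 0 < c := by
      have : c = ⟪g, d⟫ - σ * ‖d‖ ^ 2 := by
        rw [hc, hw, inner_sub_left, real_inner_smul_left, real_inner_self_eq_norm_sq]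
      rw [this]; linarith
    have happly : ∀ v : EuclideanSpace ℝ (Fin n),
        Matrix.toEuclideanLin (σ • (1 : Matrix (Fin n) (Fin n) ℝ) +
          c⁻¹ • Matrix.of fun i j => w i * w j) v
          = σ • v + (c⁻¹ * ⟪w, v⟫) • w := by
      intro v
      rw [map_add, toE_smul', toE_smul', LinearMap.add_apply, LinearMap.smul_apply,
        LinearMap.smul_apply, toE_one', toE_rankone', smul_smul]
    refine ⟨σ • 1 + c⁻¹ • Matrix.of fun i j => w i * w j, ?_, ?_, ?_, ?_⟩
    · show (σ • (1 : Matrix (Fin n) (Fin n) ℝ) + c⁻¹ • Matrix.of fun i j => w i * w j)ᵀ = _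
      rw [Matrix.transpose_add, Matrix.transpose_smul, Matrix.transpose_smul,
        Matrix.transpose_one, rankone_symm' w]
    · intro v
      rw [happly, inner_add_left, real_inner_smul_left, real_inner_smul_left,
        real_inner_self_eq_norm_sq]
      nlinarith [mul_nonneg (inv_nonneg.mpr hc0.le) (mul_self_nonneg (⟪w, v⟫ : ℝ))]
    · obtain ⟨v, hv0, hvw⟩ := exists_ortho' hn w
      exact ⟨v, hv0, by rw [happly, hvw]; simp⟩
    · rw [happly d, ← hc, inv_mul_cancel₀ hc0.ne', one_smul, hw]
      abel

/-- Let `n ≥ 2`, `x*, x₀ ∈ ℝⁿ` with `x₀ ≠ x*`, `g ∈ ℝⁿ`, `σ > 0`.  There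
exists a quadratic function `f(x) = ½xᵀQx + bᵀx + c` with `Q` symmetric, minimum eigenvalue
`λ_min(Q) = σ` (equivalently: `Q ⪰ σI` and `σ` is an eigenvalue of `Q`), minimizer at `x*`
(i.e. `Qx* = -b`, so `∇f(x₀) = Q(x₀ - x*)`), and `∇f(x₀) = g`, if and only if
(i) `‖x₀ - x*‖ ≤ ‖g‖/σ` and (ii) either `g` is a positive scalar multiple of `x₀ - x*` or
`∠(g, x₀ - x*) < arccos((σ/‖g‖)‖x₀ - x*‖)`. -/
theorem stmt_13 {n : ℕ} (hn : 2 ≤ n) (xs x₀ g : EuclideanSpace ℝ (Fin n))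
    (hne : x₀ ≠ xs) (σ : ℝ) (hσ : 0 < σ) :
    (∃ Q : Matrix (Fin n) (Fin n) ℝ, Q.IsSymm ∧
        (∀ v : EuclideanSpace ℝ (Fin n),
          σ * ‖v‖ ^ 2 ≤ (inner ℝ (Matrix.toEuclideanLin Q v) v : ℝ)) ∧
        (∃ v : EuclideanSpace ℝ (Fin n), v ≠ 0 ∧ Matrix.toEuclideanLin Q v = σ • v) ∧
        Matrix.toEuclideanLin Q (x₀ - xs) = g) ↔
      (‖x₀ - xs‖ ≤ ‖g‖ / σ ∧
        ((∃ k : ℝ, 0 < k ∧ g = k • (x₀ - xs)) ∨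
          InnerProductGeometry.angle g (x₀ - xs) <
            Real.arccos (σ / ‖g‖ * ‖x₀ - xs‖))) := by
  set d : EuclideanSpace ℝ (Fin n) := x₀ - xs with hdd
  have hd0 : d ≠ 0 := sub_ne_zero.mpr hne
  have hdn : (0:ℝ) < ‖d‖ := norm_pos_iff.mpr hd0
  constructor
  · rintro ⟨Q, hQsym, hQpos, -, hQd⟩
    have h1 : σ * ‖d‖ ^ 2 ≤ ⟪g, d⟫ := by
      have := hQpos d; rwa [hQd] at this
    have h2 : ⟪g, d⟫ ≤ ‖g‖ * ‖d‖ := real_inner_le_norm g d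
    have hgn : σ * ‖d‖ ≤ ‖g‖ := by
      have h3 : σ * ‖d‖ * ‖d‖ ≤ ‖g‖ * ‖d‖ := by nlinarith
      exact le_of_mul_le_mul_right h3 hdn
    refine ⟨(le_div_iff₀ hσ).mpr (by rw [mul_comm]; exact hgn), ?_⟩
    rcases h1.lt_or_eq with hlt | heq
    · right
      have hg0 : g ≠ 0 := by
        intro h0; rw [h0] at hlt
        rw [inner_zero_left] at hlt
        nlinarith
      have hgn' : 0 < ‖g‖ := norm_pos_iff.mpr hg0
      rw [InnerProductGeometry.angle]
      have habs := abs_real_inner_le_norm g d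
      refine Real.strictAntiOn_arccos ⟨?_, ?_⟩ ⟨?_, ?_⟩ ?_
      · have h4 : (0:ℝ) ≤ σ / ‖g‖ * ‖d‖ := by positivity
        linarith
      · rw [div_mul_eq_mul_div, div_le_one hgn']; exact hgn
      · rw [le_div_iff₀ (by positivity)]
        have := (abs_le.mp habs).1
        linarith
      · rw [div_le_one (by positivity)]; exact h2
      · rw [div_mul_eq_mul_div, div_lt_div_iff₀ hgn' (by positivity)]
        nlinarith
    · left
      have hherm : Q.IsHermitian := by
        rwa [Matrix.IsHermitian, Matrix.conjTranspose_eq_transpose_of_trivial]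
      have hsymQ := Matrix.isHermitian_iff_isSymmetric.mp hherm
      set A : EuclideanSpace ℝ (Fin n) →ₗ[ℝ] EuclideanSpace ℝ (Fin n) :=
        (Matrix.toEuclideanLin Q : EuclideanSpace ℝ (Fin n) →ₗ[ℝ] _) - σ • LinearMap.id with hA
      have hsymA : ∀ x y : EuclideanSpace ℝ (Fin n), ⟪A x, y⟫ = ⟪x, A y⟫ := by
        intro x y
        simp only [hA, LinearMap.sub_apply, LinearMap.smul_apply, LinearMap.id_apply,
          inner_sub_left, inner_sub_right, real_inner_smul_left, real_inner_smul_right]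
        rw [hsymQ x y]
      have hposA : ∀ x : EuclideanSpace ℝ (Fin n), (0:ℝ) ≤ ⟪A x, x⟫ := by
        intro x
        have := hQpos x
        simp only [hA, LinearMap.sub_apply, LinearMap.smul_apply, LinearMap.id_apply,
          inner_sub_left, real_inner_smul_left, real_inner_self_eq_norm_sq]
        linarith
      have hAd : ⟪A d, d⟫ = (0:ℝ) := by
        simp only [hA, LinearMap.sub_apply, LinearMap.smul_apply, LinearMap.id_apply,
          inner_sub_left, real_inner_smul_left, real_inner_self_eq_norm_sq, hQd]
        linarith
      have := psd_eq_zero' A hsymA hposA d hAd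
      simp only [hA, LinearMap.sub_apply, LinearMap.smul_apply, LinearMap.id_apply, hQd,
        sub_eq_zero] at this
      exact ⟨σ, hσ, this⟩
  · rintro ⟨hi, hii⟩
    apply construct' hn d g hd0 σ hσ
    rcases hii with ⟨k, hk, rfl⟩ | hang
    · have hkn : ‖k • d‖ = k * ‖d‖ := by
        rw [norm_smul, Real.norm_eq_abs, abs_of_pos hk]
      have hσk : σ ≤ k := by
        rw [le_div_iff₀ hσ, hkn] at hi
        rw [mul_comm] at hi
        exact le_of_mul_le_mul_right hi hdn
      rcases hσk.lt_or_eq with hlt | heq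
      · right
        rw [real_inner_smul_left, real_inner_self_eq_norm_sq]
        nlinarith [mul_pos (sub_pos.mpr hlt) (pow_pos hdn 2)]
      · left; rw [← heq]
    · right
      have hg0 : g ≠ 0 := by
        intro h0
        rw [h0, InnerProductGeometry.angle_zero_left] at hang
        simp only [norm_zero, div_zero, zero_mul, Real.arccos_zero] at hang
        exact lt_irrefl _ hang
      have hgn' : 0 < ‖g‖ := norm_pos_iff.mpr hg0
      by_contra hle
      push_neg at hle
      have hxy : ⟪g, d⟫ / (‖g‖ * ‖d‖) ≤ σ / ‖g‖ * ‖d‖ := by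
        rw [div_mul_eq_mul_div, div_le_div_iff₀ (by positivity) hgn']
        nlinarith
      have harc : Real.arccos (σ / ‖g‖ * ‖d‖) ≤ Real.arccos (⟪g, d⟫ / (‖g‖ * ‖d‖)) := by
        rw [Real.arccos_eq_pi_div_two_sub_arcsin, Real.arccos_eq_pi_div_two_sub_arcsin]
        have := Real.monotone_arcsin hxy
        linarith
      rw [InnerProductGeometry.angle] at hang
      linarith
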